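/- Let K be a function assigning a natural number to every triple of partitions, such that: (i) K is invariant under conjugating any two of its three arguments, i.e. K(λ,μ,ν) = K(λ',μ',ν) = K(λ',μ,ν') = K(λ,μ',ν') for all partitions λ, μ, ν of the same weight; (ii) K(λ,μ,ν) ≤ K(λ⊕(1,0), μ⊕(1,0), ν⊕(1,0)) for all partitions λ, μ, ν of the same weight; and (iii) K(λ,μ,ν) ≤ K(λ⊕(1,1), μ⊕(1,1), ν⊕(1,1)) for all partitions λ, μ, ν of the same weight. Then for all nonempty partitions λ, μ, ν of the same weight and all natural numbers a, b, c, m with a ≤ b+c, b ≤ a+c, c ≤ a+b and a+b+c ≤ 2m, one has K(λ,μ,ν) ≤ K(λ⊕(m−a,a), μ⊕(m−b,b), ν⊕(m−c,c)). (Note that the hypotheses force a, b, c ≤ m, so m−a, m−b, m−c are natural numbers.) -/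

import Mathlib

/-- A list of naturals is a partition if it is weakly decreasing and all parts are positive. -/
def IsPartition (l : List ℕ) : Prop :=
  l.Pairwise (· ≥ ·) ∧ ∀ x ∈ l, 0 < x

/-- `opPQ l p q` is the partition `l ⊕ (p, q)`: add `p` to the first part and
append `q` parts equal to `1`. -/
def opPQ (l : List ℕ) (p q : ℕ) : List ℕ :=
  (l.headD 0 + p) :: (l.tail ++ List.replicate q 1)

/-- The conjugate (transpose) partition: its `i`-th part (for `0 ≤ i < max part`)
is the number of parts of `l` that are greater than `i`. -/
def conjP (l : List ℕ) : List ℕ :=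
  (List.range (l.foldr max 0)).map (fun i => (l.filter (fun x => decide (i < x))).length)

namespace GenMono

def cnt (l : List ℕ) (i : ℕ) : ℕ := l.countP (fun x => decide (i < x))

lemma conjP_eq (l : List ℕ) : conjP l = (List.range (l.foldr max 0)).map (cnt l) := by
  simp [conjP, cnt, List.countP_eq_length_filter]

lemma opPQ_opPQ (l : List ℕ) (p₁ q₁ p₂ q₂ : ℕ) :
    opPQ (opPQ l p₁ q₁) p₂ q₂ = opPQ l (p₁ + p₂) (q₁ + q₂) := by
  unfold opPQ
  simp only [List.headD_cons, List.tail_cons, List.append_assoc, List.replicate_add,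
    Nat.add_assoc]

lemma opPQ_zero_zero {l : List ℕ} (h : l ≠ []) : opPQ l 0 0 = l := by
  cases l with
  | nil => exact absurd rfl h
  | cons x t => simp [opPQ]

lemma opPQ_ne_nil (l : List ℕ) (p q : ℕ) : opPQ l p q ≠ [] := by simp [opPQ]

lemma sum_opPQ {l : List ℕ} (h : l ≠ []) (p q : ℕ) : (opPQ l p q).sum = l.sum + p + q := by
  cases l with
  | nil => exact absurd rfl h
  | cons x t => simp [opPQ]; omega

lemma mem_le_head {l : List ℕ} (hs : l.Pairwise (· ≥ ·)) {y : ℕ} (hy : y ∈ l) :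
    y ≤ l.headD 0 := by
  cases l with
  | nil => simp at hy
  | cons x t =>
    rcases List.mem_cons.1 hy with rfl | h
    · simp
    · exact (List.pairwise_cons.1 hs).1 y h

lemma isPartition_opPQ {l : List ℕ} (hne : l ≠ []) (h : IsPartition l) (p q : ℕ) :
    IsPartition (opPQ l p q) := by
  obtain ⟨hs, hpos⟩ := h
  cases l with
  | nil => exact absurd rfl hne
  | cons x t =>
    have hxt : ∀ y ∈ t, y ≤ x := (List.pairwise_cons.1 hs).1
    have ht : t.Pairwise (· ≥ ·) := (List.pairwise_cons.1 hs).2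
    have h1t : ∀ y ∈ t, 1 ≤ y := fun y hy => hpos y (List.mem_cons_of_mem _ hy)
    constructor
    · rw [opPQ]
      refine List.pairwise_cons.2 ⟨?_, ?_⟩
      · intro b hb
        rcases List.mem_append.1 hb with hb | hb
        · have := hxt b hb; simp; omega
        · have := List.eq_of_mem_replicate hb; subst this
          have := hpos x (by simp); simp; omega
      · refine List.pairwise_append.2 ⟨ht, ?_, ?_⟩
        · exact List.pairwise_replicate.2 (by simp)
        · intro a ha b hb
          have := List.eq_of_mem_replicate hb; subst this
          exact h1t a ha
    · intro y hy
      rw [opPQ] at hy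
      rcases List.mem_cons.1 hy with rfl | hy
      · have := hpos x (by simp); simp; omega
      · rcases List.mem_append.1 hy with hy | hy
        · exact hpos y (List.mem_cons_of_mem _ hy)
        · have := List.eq_of_mem_replicate hy; omega

lemma foldr_max_le {l : List ℕ} {x : ℕ} (h : ∀ y ∈ l, y ≤ x) : l.foldr max 0 ≤ x := by
  induction l with
  | nil => simp
  | cons a t ih =>
    simp only [List.foldr_cons]
    exact max_le (h a (by simp)) (ih fun y hy => h y (List.mem_cons_of_mem _ hy))

lemma foldr_max_eq_head {l : List ℕ} (hs : l.Pairwise (· ≥ ·)) :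
    l.foldr max 0 = l.headD 0 := by
  cases l with
  | nil => simp
  | cons x t =>
    simp only [List.foldr_cons, List.headD_cons]
    exact max_eq_left (foldr_max_le (List.pairwise_cons.1 hs).1)

lemma cnt_anti (l : List ℕ) {i j : ℕ} (h : i ≤ j) : cnt l j ≤ cnt l i := by
  apply List.countP_mono_left
  intro x _ hx
  simp at hx ⊢; omega

lemma cnt_cons_pos {x : ℕ} (t : List ℕ) {i : ℕ} (h : i < x) :
    cnt (x :: t) i = cnt t i + 1 := by
  simp [cnt, List.countP_cons, h]

lemma cnt_eq_zero {l : List ℕ} {i : ℕ} (h : ∀ y ∈ l, y ≤ i) : cnt l i = 0 := by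
  apply List.countP_eq_zero.2
  intro a ha; simp; exact h a ha

/-- Key: `j < cnt l i ↔ i < l[j]` for sorted `l`. -/
lemma lt_cnt_iff {l : List ℕ} (hs : l.Pairwise (· ≥ ·)) (i j : ℕ) :
    j < cnt l i ↔ ∃ hj : j < l.length, i < l[j] := by
  induction l generalizing j with
  | nil => simp [cnt]
  | cons x t ih =>
    have hxt : ∀ y ∈ t, y ≤ x := (List.pairwise_cons.1 hs).1
    have ht : t.Pairwise (· ≥ ·) := (List.pairwise_cons.1 hs).2
    by_cases hix : i < x
    · rw [cnt_cons_pos t hix]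
      cases j with
      | zero => simp [hix]
      | succ jj =>
        rw [Nat.succ_lt_succ_iff, ih ht]
        constructor
        · rintro ⟨hj, h⟩; exact ⟨by simpa using Nat.succ_lt_succ hj, by simpa using h⟩
        · rintro ⟨hj, h⟩
          exact ⟨by simpa using Nat.lt_of_succ_lt_succ hj, by simpa using h⟩
    · have h0 : cnt (x :: t) i = 0 := by
        apply cnt_eq_zero
        intro y hy
        rcases List.mem_cons.1 hy with rfl | hy
        · omega
        · have := hxt y hy; omega
      rw [h0]
      simp only [Nat.not_lt_zero, false_iff, not_exists]
      intro hj
      have : (x :: t)[j] ≤ x := mem_le_head hs (List.getElem_mem hj)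
      omega



lemma countP_lt_range {k M : ℕ} (h : k ≤ M) :
    (List.range M).countP (fun i => decide (i < k)) = k := by
  induction M with
  | zero => simp; omega
  | succ M ih =>
    rw [List.range_succ, List.countP_append]
    rcases Nat.lt_or_ge k (M+1) with hk | hk
    · have hkM : k ≤ M := by omega
      rw [ih hkM]
      simp [Nat.not_lt.2 hkM]
    · have hkM : k = M + 1 := by omega
      subst hkM
      have hthis : (List.range M).countP (fun i => decide (i < M + 1)) =
          (List.range M).length :=
        List.countP_eq_length.2 (by intro a ha; simp only [List.mem_range] at ha; simp; omega)
      rw [hthis]; simp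

lemma head_mem {l : List ℕ} (h : l ≠ []) : l.headD 0 ∈ l := by
  cases l with
  | nil => exact absurd rfl h
  | cons x t => simp

lemma cnt_pos {l : List ℕ} (hs : l.Pairwise (· ≥ ·)) {i : ℕ} (h : i < l.headD 0) :
    0 < cnt l i := by
  apply List.countP_pos_iff.2
  refine ⟨l.headD 0, head_mem ?_, by simp only [decide_eq_true_eq]; exact h⟩
  intro hnil; subst hnil; simp at h

lemma conjP_sorted (l : List ℕ) : (conjP l).Pairwise (· ≥ ·) := by
  rw [conjP_eq]
  rw [List.pairwise_map]
  exact (List.pairwise_lt_range (n := _)).imp (fun h => cnt_anti l (Nat.le_of_lt h))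

lemma isPartition_conjP {l : List ℕ} (h : IsPartition l) : IsPartition (conjP l) := by
  refine ⟨conjP_sorted l, ?_⟩
  intro x hx
  rw [conjP_eq] at hx
  obtain ⟨i, hi, rfl⟩ := List.mem_map.1 hx
  rw [List.mem_range, foldr_max_eq_head h.1] at hi
  exact cnt_pos h.1 hi

lemma conjP_ne_nil {l : List ℕ} (hne : l ≠ []) (h : IsPartition l) : conjP l ≠ [] := by
  have hpos : 0 < l.headD 0 := h.2 _ (head_mem hne)
  intro hc
  have hlen := congrArg List.length hc
  rw [conjP_eq, foldr_max_eq_head h.1] at hlen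
  simp only [List.length_map, List.length_range, List.length_nil] at hlen
  omega

lemma cnt_zero {l : List ℕ} (h : ∀ x ∈ l, 0 < x) : cnt l 0 = l.length := by
  apply List.countP_eq_length.2
  intro a ha; simp; exact h a ha

lemma conjP_length {l : List ℕ} : (conjP l).length = l.foldr max 0 := by
  rw [conjP_eq]; simp

lemma conjP_getElem {l : List ℕ} {j : ℕ} (hj : j < (conjP l).length) :
    (conjP l)[j] = cnt l j := by
  rw [List.getElem_of_eq (conjP_eq l) hj, List.getElem_map, List.getElem_range]

lemma getElem_le_head {l : List ℕ} (hs : l.Pairwise (· ≥ ·)) {j : ℕ} (hj : j < l.length) :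
    l[j] ≤ l.headD 0 := mem_le_head hs (List.getElem_mem hj)

/-- Conjugation is an involution on partitions. -/
lemma conjP_conjP {l : List ℕ} (h : IsPartition l) : conjP (conjP l) = l := by
  rcases eq_or_ne l [] with rfl | hne
  · simp [conjP]
  have hc : IsPartition (conjP l) := isPartition_conjP h
  have hcne : conjP l ≠ [] := conjP_ne_nil hne h
  have hhead : (conjP l).headD 0 = l.length := by
    rw [conjP_eq, foldr_max_eq_head h.1]
    obtain ⟨k, hk⟩ : ∃ k, l.headD 0 = k + 1 :=
      ⟨l.headD 0 - 1, by have := h.2 _ (head_mem hne); omega⟩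
    rw [hk, List.range_succ_eq_map]
    simp [cnt_zero h.2]
  rw [conjP_eq (conjP l), foldr_max_eq_head hc.1, hhead]
  apply List.ext_getElem
  · simp
  · intro j h1 h2
    rw [List.getElem_map, List.getElem_range]
    show cnt (conjP l) j = l[j]
    have hjl : j < l.length := h2
    rw [cnt, conjP_eq, List.countP_map]
    have hmax : l.foldr max 0 = l.headD 0 := foldr_max_eq_head h.1
    have hcongr : ∀ i ∈ List.range (l.foldr max 0),
        ((fun x => decide (j < x)) ∘ cnt l) i = true ↔ (fun i => decide (i < l[j])) i = true := by
      intro i _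
      simp only [Function.comp_apply, decide_eq_true_eq]
      rw [lt_cnt_iff h.1]
      constructor
      · rintro ⟨_, hh⟩; exact hh
      · intro hh; exact ⟨hjl, hh⟩
    rw [List.countP_congr hcongr]
    exact countP_lt_range (by rw [hmax]; exact getElem_le_head h.1 hjl)



lemma headD_eq_getElem {l : List ℕ} (hne : l ≠ []) :
    l.headD 0 = l[0]'(List.length_pos_iff.2 hne) := by
  cases l with
  | nil => exact absurd rfl hne
  | cons x t => simp

lemma conjP_headD {l : List ℕ} (hne : l ≠ []) (h : IsPartition l) :
    (conjP l).headD 0 = cnt l 0 := by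
  rw [headD_eq_getElem (conjP_ne_nil hne h), conjP_getElem]

lemma sum_map_add (L : List ℕ) (f g : ℕ → ℕ) :
    (L.map (fun i => f i + g i)).sum = (L.map f).sum + (L.map g).sum := by
  induction L with
  | nil => simp
  | cons a t ih => simp [ih]; omega

lemma sum_ind {x M : ℕ} (h : x ≤ M) :
    ((List.range M).map (fun i => if i < x then 1 else 0)).sum = x := by
  induction M with
  | zero => simp; omega
  | succ M ih =>
    rw [List.range_succ, List.map_append, List.sum_append]
    rcases Nat.lt_or_ge x (M+1) with hx | hx
    · have hxM : x ≤ M := by omega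
      rw [ih hxM]; simp [Nat.not_lt.2 hxM]
    · have hxM : x = M + 1 := by omega
      subst hxM
      have : (List.range M).map (fun i => if i < M + 1 then 1 else 0)
          = (List.range M).map (fun _ => 1) := by
        apply List.map_congr_left
        intro i hi
        simp only [List.mem_range] at hi
        simp; omega
      rw [this]; simp

lemma sum_map_cnt : ∀ (l : List ℕ) (M : ℕ), (∀ x ∈ l, x ≤ M) →
    ((List.range M).map (cnt l)).sum = l.sum := by
  intro l
  induction l with
  | nil =>
    intro M _
    have hnil : cnt ([] : List ℕ) = fun _ => 0 := by funext i; simp [cnt]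
    rw [hnil]; simp
  | cons x t ih =>
    intro M hM
    have hfun : cnt (x :: t) = fun i => cnt t i + (if i < x then 1 else 0) := by
      funext i
      simp [cnt, List.countP_cons]
    rw [hfun, sum_map_add, ih M (fun y hy => hM y (List.mem_cons_of_mem _ hy)),
      sum_ind (hM x (by simp))]
    simp [Nat.add_comm]

lemma le_foldr_max {l : List ℕ} {x : ℕ} (hx : x ∈ l) : x ≤ l.foldr max 0 := by
  induction l with
  | nil => simp at hx
  | cons a t ih =>
    rcases List.mem_cons.1 hx with rfl | hx
    · simp
    · simp only [List.foldr_cons]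
      exact le_trans (ih hx) (le_max_right _ _)

lemma conjP_sum (l : List ℕ) : (conjP l).sum = l.sum := by
  rw [conjP_eq]
  exact sum_map_cnt l _ (fun x hx => le_foldr_max hx)

lemma cnt_replicate_one (q i : ℕ) : cnt (List.replicate q 1) i = if i = 0 then q else 0 := by
  simp only [cnt, List.countP_replicate, decide_eq_true_eq]
  split_ifs <;> omega

lemma cnt_append (a b : List ℕ) (i : ℕ) : cnt (a ++ b) i = cnt a i + cnt b i :=
  List.countP_append

/-- Conjugation exchanges row- and column-additions. -/
lemma conjP_opPQ {l : List ℕ} (hne : l ≠ []) (h : IsPartition l) (p q : ℕ) :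
    conjP (opPQ l p q) = opPQ (conjP l) q p := by
  obtain ⟨x, t, rfl⟩ : ∃ x t, l = x :: t := by
    cases l with
    | nil => exact absurd rfl hne
    | cons x t => exact ⟨x, t, rfl⟩
  have hx1 : 1 ≤ x := h.2 x (by simp)
  have hxt : ∀ y ∈ t, y ≤ x := (List.pairwise_cons.1 h.1).1
  have hP : IsPartition (opPQ (x :: t) p q) := isPartition_opPQ hne h p q
  have hop : opPQ (x :: t) p q = (x + p) :: (t ++ List.replicate q 1) := by simp [opPQ]
  have hfold : (opPQ (x :: t) p q).foldr max 0 = x + p := by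
    rw [foldr_max_eq_head hP.1, hop]; simp
  have hclen : (conjP (x :: t)).length = x := by
    rw [conjP_length, foldr_max_eq_head h.1]; simp
  have hchead : (conjP (x :: t)).headD 0 = cnt t 0 + 1 := by
    rw [conjP_headD hne h, cnt_cons_pos t (by omega)]
  rw [conjP_eq (opPQ (x :: t) p q), hfold]
  apply List.ext_getElem
  · simp only [List.length_map, List.length_range, opPQ, List.length_cons,
      List.length_append, List.length_replicate, List.length_tail, hclen]
    omega
  · intro i h1 h2
    have h1' : i < x + p := by simpa using h1
    rw [List.getElem_map, List.getElem_range, hop]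
    have hL : cnt ((x + p) :: (t ++ List.replicate q 1)) i
        = cnt t i + (if i = 0 then q else 0) + 1 := by
      rw [cnt_cons_pos _ h1', cnt_append, cnt_replicate_one]
    rw [hL]
    show _ = (opPQ (conjP (x :: t)) q p)[i]
    cases i with
    | zero =>
      simp only [opPQ, List.getElem_cons_zero, hchead]
      split_ifs <;> omega
    | succ k =>
      have hk : k + 1 < x + p := h1'
      simp only [opPQ]
      rw [List.getElem_cons_succ]
      rw [List.getElem_append]
      have htl : (conjP (x :: t)).tail.length = x - 1 := by
        rw [List.length_tail, hclen]
      rcases Nat.lt_or_ge k (x - 1) with hkx | hkx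
      · rw [dif_pos (by rw [htl]; exact hkx)]
        rw [List.getElem_tail]
        rw [conjP_getElem]
        rw [cnt_cons_pos t (by omega)]
        simp
      · rw [dif_neg (by rw [htl]; omega)]
        rw [List.getElem_replicate]
        have : cnt t (k + 1) = 0 := cnt_eq_zero (fun y hy => by have := hxt y hy; omega)
        rw [this]
        simp



lemma opPQ_congr (l : List ℕ) {p q p' q' : ℕ} (hp : p = p') (hq : q = q') :
    opPQ l p q = opPQ l p' q' := by rw [hp, hq]

section Steps

abbrev HC (K : List ℕ → List ℕ → List ℕ → ℕ) : Prop :=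
  ∀ l m n : List ℕ, IsPartition l → IsPartition m → IsPartition n →
      l.sum = m.sum → m.sum = n.sum →
      K l m n = K (conjP l) (conjP m) n ∧
      K l m n = K (conjP l) m (conjP n) ∧
      K l m n = K l (conjP m) (conjP n)

abbrev HM (K : List ℕ → List ℕ → List ℕ → ℕ) : Prop :=
  ∀ l m n : List ℕ, IsPartition l → IsPartition m → IsPartition n →
      l.sum = m.sum → m.sum = n.sum →
      K l m n ≤ K (opPQ l 1 0) (opPQ m 1 0) (opPQ n 1 0)

abbrev HM11 (K : List ℕ → List ℕ → List ℕ → ℕ) : Prop :=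
  ∀ l m n : List ℕ, IsPartition l → IsPartition m → IsPartition n →
      l.sum = m.sum → m.sum = n.sum →
      K l m n ≤ K (opPQ l 1 1) (opPQ m 1 1) (opPQ n 1 1)

variable (K : List ℕ → List ℕ → List ℕ → ℕ)

/-- Column–column–row step: conjugate the first two arguments. -/
lemma step_ccr (hconj : HC K) (hmono : HM K) {l m n : List ℕ} (hl : IsPartition l) (hm : IsPartition m) (hn : IsPartition n)
    (hlne : l ≠ []) (hmne : m ≠ []) (hnne : n ≠ [])
    (hw₁ : l.sum = m.sum) (hw₂ : m.sum = n.sum) :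
    K l m n ≤ K (opPQ l 0 1) (opPQ m 0 1) (opPQ n 1 0) := by
  have hl' := isPartition_conjP hl
  have hm' := isPartition_conjP hm
  have hl'ne := conjP_ne_nil hlne hl
  have hm'ne := conjP_ne_nil hmne hm
  have e1 : K l m n = K (conjP l) (conjP m) n := (hconj l m n hl hm hn hw₁ hw₂).1
  have e2 : K (conjP l) (conjP m) n
      ≤ K (opPQ (conjP l) 1 0) (opPQ (conjP m) 1 0) (opPQ n 1 0) :=
    hmono _ _ _ hl' hm' hn (by rw [conjP_sum, conjP_sum, hw₁])
      (by rw [conjP_sum, hw₂])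
  have e3 : K (opPQ (conjP l) 1 0) (opPQ (conjP m) 1 0) (opPQ n 1 0)
      = K (conjP (opPQ (conjP l) 1 0)) (conjP (opPQ (conjP m) 1 0)) (opPQ n 1 0) :=
    (hconj _ _ _ (isPartition_opPQ hl'ne hl' 1 0) (isPartition_opPQ hm'ne hm' 1 0)
      (isPartition_opPQ hnne hn 1 0)
      (by rw [sum_opPQ hl'ne, sum_opPQ hm'ne, conjP_sum, conjP_sum, hw₁])
      (by rw [sum_opPQ hm'ne, sum_opPQ hnne, conjP_sum, hw₂])).1
  have e4 : conjP (opPQ (conjP l) 1 0) = opPQ l 0 1 := by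
    rw [conjP_opPQ hl'ne hl', conjP_conjP hl]
  have e5 : conjP (opPQ (conjP m) 1 0) = opPQ m 0 1 := by
    rw [conjP_opPQ hm'ne hm', conjP_conjP hm]
  rw [e1]
  refine le_trans e2 (le_of_eq ?_)
  rw [e3, e4, e5]

/-- Column–row–column step: conjugate the first and third arguments. -/
lemma step_crc (hconj : HC K) (hmono : HM K) {l m n : List ℕ} (hl : IsPartition l) (hm : IsPartition m) (hn : IsPartition n)
    (hlne : l ≠ []) (hmne : m ≠ []) (hnne : n ≠ [])
    (hw₁ : l.sum = m.sum) (hw₂ : m.sum = n.sum) :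
    K l m n ≤ K (opPQ l 0 1) (opPQ m 1 0) (opPQ n 0 1) := by
  have hl' := isPartition_conjP hl
  have hn' := isPartition_conjP hn
  have hl'ne := conjP_ne_nil hlne hl
  have hn'ne := conjP_ne_nil hnne hn
  have e1 : K l m n = K (conjP l) m (conjP n) := (hconj l m n hl hm hn hw₁ hw₂).2.1
  have e2 : K (conjP l) m (conjP n)
      ≤ K (opPQ (conjP l) 1 0) (opPQ m 1 0) (opPQ (conjP n) 1 0) :=
    hmono _ _ _ hl' hm hn' (by rw [conjP_sum, hw₁]) (by rw [conjP_sum, hw₂])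
  have e3 : K (opPQ (conjP l) 1 0) (opPQ m 1 0) (opPQ (conjP n) 1 0)
      = K (conjP (opPQ (conjP l) 1 0)) (opPQ m 1 0) (conjP (opPQ (conjP n) 1 0)) :=
    (hconj _ _ _ (isPartition_opPQ hl'ne hl' 1 0) (isPartition_opPQ hmne hm 1 0)
      (isPartition_opPQ hn'ne hn' 1 0)
      (by rw [sum_opPQ hl'ne, sum_opPQ hmne, conjP_sum, hw₁])
      (by rw [sum_opPQ hmne, sum_opPQ hn'ne, conjP_sum, hw₂])).2.1
  have e4 : conjP (opPQ (conjP l) 1 0) = opPQ l 0 1 := by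
    rw [conjP_opPQ hl'ne hl', conjP_conjP hl]
  have e5 : conjP (opPQ (conjP n) 1 0) = opPQ n 0 1 := by
    rw [conjP_opPQ hn'ne hn', conjP_conjP hn]
  rw [e1]
  refine le_trans e2 (le_of_eq ?_)
  rw [e3, e4, e5]

/-- Row–column–column step: conjugate the last two arguments. -/
lemma step_rcc (hconj : HC K) (hmono : HM K) {l m n : List ℕ} (hl : IsPartition l) (hm : IsPartition m) (hn : IsPartition n)
    (hlne : l ≠ []) (hmne : m ≠ []) (hnne : n ≠ [])
    (hw₁ : l.sum = m.sum) (hw₂ : m.sum = n.sum) :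
    K l m n ≤ K (opPQ l 1 0) (opPQ m 0 1) (opPQ n 0 1) := by
  have hm' := isPartition_conjP hm
  have hn' := isPartition_conjP hn
  have hm'ne := conjP_ne_nil hmne hm
  have hn'ne := conjP_ne_nil hnne hn
  have e1 : K l m n = K l (conjP m) (conjP n) := (hconj l m n hl hm hn hw₁ hw₂).2.2
  have e2 : K l (conjP m) (conjP n)
      ≤ K (opPQ l 1 0) (opPQ (conjP m) 1 0) (opPQ (conjP n) 1 0) :=
    hmono _ _ _ hl hm' hn' (by rw [conjP_sum, hw₁]) (by rw [conjP_sum, conjP_sum, hw₂])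
  have e3 : K (opPQ l 1 0) (opPQ (conjP m) 1 0) (opPQ (conjP n) 1 0)
      = K (opPQ l 1 0) (conjP (opPQ (conjP m) 1 0)) (conjP (opPQ (conjP n) 1 0)) :=
    (hconj _ _ _ (isPartition_opPQ hlne hl 1 0) (isPartition_opPQ hm'ne hm' 1 0)
      (isPartition_opPQ hn'ne hn' 1 0)
      (by rw [sum_opPQ hlne, sum_opPQ hm'ne, conjP_sum, hw₁])
      (by rw [sum_opPQ hm'ne, sum_opPQ hn'ne, conjP_sum, conjP_sum, hw₂])).2.2
  have e4 : conjP (opPQ (conjP m) 1 0) = opPQ m 0 1 := by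
    rw [conjP_opPQ hm'ne hm', conjP_conjP hm]
  have e5 : conjP (opPQ (conjP n) 1 0) = opPQ n 0 1 := by
    rw [conjP_opPQ hn'ne hn', conjP_conjP hn]
  rw [e1]
  refine le_trans e2 (le_of_eq ?_)
  rw [e3, e4, e5]

lemma main_aux (hconj : HC K) (hmono : HM K) (hmono11 : HM11 K) : ∀ N z x y1 y2 y3 : ℕ, z + x + y1 + y2 + y3 = N →
    ∀ l m n : List ℕ, IsPartition l → IsPartition m → IsPartition n →
      l ≠ [] → m ≠ [] → n ≠ [] → l.sum = m.sum → m.sum = n.sum →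
      K l m n ≤ K (opPQ l (z + x + y1) (x + y2 + y3)) (opPQ m (z + x + y2) (x + y1 + y3))
        (opPQ n (z + x + y3) (x + y1 + y2)) := by
  intro N
  induction N with
  | zero =>
    intro z x y1 y2 y3 hN l m n hl hm hn hlne hmne hnne hw₁ hw₂
    obtain ⟨rfl, rfl, rfl, rfl, rfl⟩ : z = 0 ∧ x = 0 ∧ y1 = 0 ∧ y2 = 0 ∧ y3 = 0 := by omega
    simp only [Nat.add_zero]
    rw [opPQ_zero_zero hlne, opPQ_zero_zero hmne, opPQ_zero_zero hnne]
  | succ N ih =>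
    intro z x y1 y2 y3 hN l m n hl hm hn hlne hmne hnne hw₁ hw₂
    by_cases hz : 0 < z
    · obtain ⟨z', rfl⟩ : ∃ z', z = z' + 1 := ⟨z - 1, by omega⟩
      refine le_trans (hmono l m n hl hm hn hw₁ hw₂) (le_trans (ih z' x y1 y2 y3 (by omega)
        (opPQ l 1 0) (opPQ m 1 0) (opPQ n 1 0)
        (isPartition_opPQ hlne hl 1 0) (isPartition_opPQ hmne hm 1 0)
        (isPartition_opPQ hnne hn 1 0)
        (opPQ_ne_nil l 1 0) (opPQ_ne_nil m 1 0) (opPQ_ne_nil n 1 0)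
        (by rw [sum_opPQ hlne, sum_opPQ hmne, hw₁]) (by rw [sum_opPQ hmne, sum_opPQ hnne, hw₂]))
        (le_of_eq ?_))
      rw [opPQ_opPQ, opPQ_opPQ, opPQ_opPQ,
        opPQ_congr l (show 1 + (z' + x + y1) = z' + 1 + x + y1 by omega)
          (show 0 + (x + y2 + y3) = x + y2 + y3 by omega),
        opPQ_congr m (show 1 + (z' + x + y2) = z' + 1 + x + y2 by omega)
          (show 0 + (x + y1 + y3) = x + y1 + y3 by omega),
        opPQ_congr n (show 1 + (z' + x + y3) = z' + 1 + x + y3 by omega)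
          (show 0 + (x + y1 + y2) = x + y1 + y2 by omega)]
    by_cases hx : 0 < x
    · obtain ⟨x', rfl⟩ : ∃ x', x = x' + 1 := ⟨x - 1, by omega⟩
      refine le_trans (hmono11 l m n hl hm hn hw₁ hw₂) (le_trans (ih z x' y1 y2 y3 (by omega)
        (opPQ l 1 1) (opPQ m 1 1) (opPQ n 1 1)
        (isPartition_opPQ hlne hl 1 1) (isPartition_opPQ hmne hm 1 1)
        (isPartition_opPQ hnne hn 1 1)
        (opPQ_ne_nil l 1 1) (opPQ_ne_nil m 1 1) (opPQ_ne_nil n 1 1)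
        (by rw [sum_opPQ hlne, sum_opPQ hmne, hw₁]) (by rw [sum_opPQ hmne, sum_opPQ hnne, hw₂]))
        (le_of_eq ?_))
      rw [opPQ_opPQ, opPQ_opPQ, opPQ_opPQ,
        opPQ_congr l (show 1 + (z + x' + y1) = z + (x' + 1) + y1 by omega)
          (show 1 + (x' + y2 + y3) = x' + 1 + y2 + y3 by omega),
        opPQ_congr m (show 1 + (z + x' + y2) = z + (x' + 1) + y2 by omega)
          (show 1 + (x' + y1 + y3) = x' + 1 + y1 + y3 by omega),
        opPQ_congr n (show 1 + (z + x' + y3) = z + (x' + 1) + y3 by omega)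
          (show 1 + (x' + y1 + y2) = x' + 1 + y1 + y2 by omega)]
    by_cases hy1 : 0 < y1
    · obtain ⟨y1', rfl⟩ : ∃ y1', y1 = y1' + 1 := ⟨y1 - 1, by omega⟩
      refine le_trans (step_rcc K hconj hmono hl hm hn hlne hmne hnne hw₁ hw₂)
        (le_trans (ih z x y1' y2 y3 (by omega)
        (opPQ l 1 0) (opPQ m 0 1) (opPQ n 0 1)
        (isPartition_opPQ hlne hl 1 0) (isPartition_opPQ hmne hm 0 1)
        (isPartition_opPQ hnne hn 0 1)
        (opPQ_ne_nil l 1 0) (opPQ_ne_nil m 0 1) (opPQ_ne_nil n 0 1)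
        (by rw [sum_opPQ hlne, sum_opPQ hmne, hw₁]) (by rw [sum_opPQ hmne, sum_opPQ hnne, hw₂]))
        (le_of_eq ?_))
      rw [opPQ_opPQ, opPQ_opPQ, opPQ_opPQ,
        opPQ_congr l (show 1 + (z + x + y1') = z + x + (y1' + 1) by omega)
          (show 0 + (x + y2 + y3) = x + y2 + y3 by omega),
        opPQ_congr m (show 0 + (z + x + y2) = z + x + y2 by omega)
          (show 1 + (x + y1' + y3) = x + (y1' + 1) + y3 by omega),
        opPQ_congr n (show 0 + (z + x + y3) = z + x + y3 by omega)
          (show 1 + (x + y1' + y2) = x + (y1' + 1) + y2 by omega)]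
    by_cases hy2 : 0 < y2
    · obtain ⟨y2', rfl⟩ : ∃ y2', y2 = y2' + 1 := ⟨y2 - 1, by omega⟩
      refine le_trans (step_crc K hconj hmono hl hm hn hlne hmne hnne hw₁ hw₂)
        (le_trans (ih z x y1 y2' y3 (by omega)
        (opPQ l 0 1) (opPQ m 1 0) (opPQ n 0 1)
        (isPartition_opPQ hlne hl 0 1) (isPartition_opPQ hmne hm 1 0)
        (isPartition_opPQ hnne hn 0 1)
        (opPQ_ne_nil l 0 1) (opPQ_ne_nil m 1 0) (opPQ_ne_nil n 0 1)
        (by rw [sum_opPQ hlne, sum_opPQ hmne, hw₁]) (by rw [sum_opPQ hmne, sum_opPQ hnne, hw₂]))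
        (le_of_eq ?_))
      rw [opPQ_opPQ, opPQ_opPQ, opPQ_opPQ,
        opPQ_congr l (show 0 + (z + x + y1) = z + x + y1 by omega)
          (show 1 + (x + y2' + y3) = x + (y2' + 1) + y3 by omega),
        opPQ_congr m (show 1 + (z + x + y2') = z + x + (y2' + 1) by omega)
          (show 0 + (x + y1 + y3) = x + y1 + y3 by omega),
        opPQ_congr n (show 0 + (z + x + y3) = z + x + y3 by omega)
          (show 1 + (x + y1 + y2') = x + y1 + (y2' + 1) by omega)]
    -- now y3 > 0
    have hy3 : 0 < y3 := by omega
    obtain ⟨y3', rfl⟩ : ∃ y3', y3 = y3' + 1 := ⟨y3 - 1, by omega⟩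
    refine le_trans (step_ccr K hconj hmono hl hm hn hlne hmne hnne hw₁ hw₂)
      (le_trans (ih z x y1 y2 y3' (by omega)
      (opPQ l 0 1) (opPQ m 0 1) (opPQ n 1 0)
      (isPartition_opPQ hlne hl 0 1) (isPartition_opPQ hmne hm 0 1)
      (isPartition_opPQ hnne hn 1 0)
      (opPQ_ne_nil l 0 1) (opPQ_ne_nil m 0 1) (opPQ_ne_nil n 1 0)
      (by rw [sum_opPQ hlne, sum_opPQ hmne, hw₁]) (by rw [sum_opPQ hmne, sum_opPQ hnne, hw₂]))
      (le_of_eq ?_))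
    rw [opPQ_opPQ, opPQ_opPQ, opPQ_opPQ,
      opPQ_congr l (show 0 + (z + x + y1) = z + x + y1 by omega)
        (show 1 + (x + y2 + y3') = x + y2 + (y3' + 1) by omega),
      opPQ_congr m (show 0 + (z + x + y2) = z + x + y2 by omega)
        (show 1 + (x + y1 + y3') = x + y1 + (y3' + 1) by omega),
      opPQ_congr n (show 1 + (z + x + y3') = z + x + (y3' + 1) by omega)
        (show 0 + (x + y1 + y2) = x + y1 + y2 by omega)]

end Steps

end GenMono

/-- If `K` is invariant under conjugating any two of its arguments, satisfies Murnaghan's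
monotonicity `K(λ,μ,ν) ≤ K(λ⊕(1,0), μ⊕(1,0), ν⊕(1,0))` (hypothesis (ii)) and the
monotonicity `K(λ,μ,ν) ≤ K(λ⊕(1,1), μ⊕(1,1), ν⊕(1,1))` of Conjecture 5.10 (hypothesis
(iii)), then for all nonempty partitions of the same weight and all `a, b, c, m` with
`a ≤ b + c`, `b ≤ a + c`, `c ≤ a + b` and `a + b + c ≤ 2m`, one has
`K(λ,μ,ν) ≤ K(λ⊕(m-a,a), μ⊕(m-b,b), ν⊕(m-c,c))` (Conjecture 5.11). -/
theorem general_monotonicity (K : List ℕ → List ℕ → List ℕ → ℕ)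
    (hconj : ∀ l m n : List ℕ, IsPartition l → IsPartition m → IsPartition n →
      l.sum = m.sum → m.sum = n.sum →
      K l m n = K (conjP l) (conjP m) n ∧
      K l m n = K (conjP l) m (conjP n) ∧
      K l m n = K l (conjP m) (conjP n))
    (hmono : ∀ l m n : List ℕ, IsPartition l → IsPartition m → IsPartition n →
      l.sum = m.sum → m.sum = n.sum →
      K l m n ≤ K (opPQ l 1 0) (opPQ m 1 0) (opPQ n 1 0))
    (hmono11 : ∀ l m n : List ℕ, IsPartition l → IsPartition m → IsPartition n →
      l.sum = m.sum → m.sum = n.sum →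
      K l m n ≤ K (opPQ l 1 1) (opPQ m 1 1) (opPQ n 1 1))
    (l m n : List ℕ)
    (hl : IsPartition l) (hm : IsPartition m) (hn : IsPartition n)
    (hlne : l ≠ []) (hmne : m ≠ []) (hnne : n ≠ [])
    (hw₁ : l.sum = m.sum) (hw₂ : m.sum = n.sum)
    (a b c M : ℕ) (hab : a ≤ b + c) (hbc : b ≤ a + c) (hca : c ≤ a + b)
    (habcM : a + b + c ≤ 2 * M) :
    K l m n ≤ K (opPQ l (M - a) a) (opPQ m (M - b) b) (opPQ n (M - c) c) := by
  obtain ⟨x, y1, y2, y3, z, h1, h2, h3, h4, h5, h6⟩ :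
      ∃ x y1 y2 y3 z : ℕ, z + x + y1 = M - a ∧ x + y2 + y3 = a ∧ z + x + y2 = M - b ∧
        x + y1 + y3 = b ∧ z + x + y3 = M - c ∧ x + y1 + y2 = c := by
    refine ⟨(a + b + c) % 2, (b + c - a - (a + b + c) % 2) / 2,
      (a + c - b - (a + b + c) % 2) / 2, (a + b - c - (a + b + c) % 2) / 2,
      M - (a + b + c + (a + b + c) % 2) / 2, ?_, ?_, ?_, ?_, ?_, ?_⟩ <;> omega
  have h := GenMono.main_aux K hconj hmono hmono11 (z + x + y1 + y2 + y3) z x y1 y2 y3 rfl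
    l m n hl hm hn hlne hmne hnne hw₁ hw₂
  rw [h1, h2, h3, h4, h5, h6] at h
  exact h
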